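/- Under the assumptions of the previous setting (conditional independence given Ω_n with δ_n := P(Ω_n^c) < 1), for every measurable A, B one has |P{X_n ∈ A, Y_n ∈ B} − P{X_n ∈ A}P{Y_n ∈ B}| ≤ 2δ_n(1 + 1/(1 − δ_n)). -/

import Mathlib

open MeasureTheory

theorem stmt_3 {Ω E₁ E₂ : Type*} [MeasurableSpace Ω]
    [MeasurableSpace E₁] [MeasurableSpace E₂]
    (P : Measure Ω) [IsProbabilityMeasure P]
    (X : Ω → E₁) (Y : Ω → E₂)
    (hX : Measurable X) (hY : Measurable Y)
    (Ω' : Set Ω) (hΩ'meas : MeasurableSet Ω')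
    (δ : ℝ) (hδ : δ = (P Ω'ᶜ).toReal) (hδlt : δ < 1)
    (hcondindep : ∀ A : Set E₁, ∀ B : Set E₂, MeasurableSet A → MeasurableSet B →
      P ({ω | X ω ∈ A ∧ Y ω ∈ B} ∩ Ω') / P Ω'
        = (P ({ω | X ω ∈ A} ∩ Ω') / P Ω') * (P ({ω | Y ω ∈ B} ∩ Ω') / P Ω'))
    (A : Set E₁) (B : Set E₂) (hA : MeasurableSet A) (hB : MeasurableSet B) :
    |(P {ω | X ω ∈ A ∧ Y ω ∈ B}).toReal
        - (P {ω | X ω ∈ A}).toReal * (P {ω | Y ω ∈ B}).toReal|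
      ≤ 2 * δ * (1 + 1 / (1 - δ)) := by
  set p : ℝ := (P Ω').toReal with hp
  have hP1 : P Ω' + P Ω'ᶜ = 1 := by
    rw [measure_add_measure_compl hΩ'meas, measure_univ]
  have hpδ : p + δ = 1 := by
    rw [hp, hδ, ← ENNReal.toReal_add (measure_ne_top _ _) (measure_ne_top _ _), hP1,
      ENNReal.toReal_one]
  have hδ0 : 0 ≤ δ := hδ ▸ ENNReal.toReal_nonneg
  have hp0 : 0 < p := by linarith
  -- decomposition lemma
  have hdec : ∀ S : Set Ω, MeasurableSet S →
      (P S).toReal = (P (S ∩ Ω')).toReal + (P (S ∩ Ω'ᶜ)).toReal ∧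
      (P (S ∩ Ω'ᶜ)).toReal ≤ δ ∧ 0 ≤ (P (S ∩ Ω'ᶜ)).toReal ∧
      (P (S ∩ Ω')).toReal ≤ p ∧ 0 ≤ (P (S ∩ Ω')).toReal := by
    intro S hS
    refine ⟨?_, ?_, ENNReal.toReal_nonneg, ?_, ENNReal.toReal_nonneg⟩
    · rw [← ENNReal.toReal_add (measure_ne_top _ _) (measure_ne_top _ _)]
      congr 1
      rw [← measure_inter_add_diff S hΩ'meas, Set.diff_eq]
    · rw [hδ]
      exact ENNReal.toReal_mono (measure_ne_top _ _) (measure_mono Set.inter_subset_right)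
    · exact ENNReal.toReal_mono (measure_ne_top _ _) (measure_mono Set.inter_subset_right)
  have hSA : MeasurableSet {ω | X ω ∈ A} := hX hA
  have hSB : MeasurableSet {ω | Y ω ∈ B} := hY hB
  have hSAB : MeasurableSet {ω | X ω ∈ A ∧ Y ω ∈ B} := hSA.inter hSB
  obtain ⟨hA1, hA2, hA3, hA4, hA5⟩ := hdec _ hSA
  obtain ⟨hB1, hB2, hB3, hB4, hB5⟩ := hdec _ hSB
  obtain ⟨hC1, hC2, hC3, hC4, hC5⟩ := hdec _ hSAB
  set u : ℝ := (P ({ω | X ω ∈ A ∧ Y ω ∈ B} ∩ Ω')).toReal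
  set v : ℝ := (P ({ω | X ω ∈ A} ∩ Ω')).toReal
  set w : ℝ := (P ({ω | Y ω ∈ B} ∩ Ω')).toReal
  set eA : ℝ := (P ({ω | X ω ∈ A} ∩ Ω'ᶜ)).toReal
  set eB : ℝ := (P ({ω | Y ω ∈ B} ∩ Ω'ᶜ)).toReal
  set eC : ℝ := (P ({ω | X ω ∈ A ∧ Y ω ∈ B} ∩ Ω'ᶜ)).toReal
  have hind : u * p = v * w := by
    have h := congrArg ENNReal.toReal (hcondindep A B hA hB)
    rw [ENNReal.toReal_div, ENNReal.toReal_mul, ENNReal.toReal_div, ENNReal.toReal_div] at h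
    field_simp at h
    have hq : (P Ω').toReal ≠ 0 := hp0.ne'
    rw [div_eq_div_iff hq (pow_ne_zero 2 hq)] at h
    exact mul_right_cancel₀ hp0.ne' (by linear_combination h)
  rw [hA1, hB1, hC1]
  have hbound : p * (2 * δ * (1 + 1 / (1 - δ))) = 2 * δ * (p + 1) := by
    have h1 : (1 : ℝ) - δ = p := by linarith
    rw [h1]
    field_simp
  rw [abs_le]
  have hp1 : p ≤ 1 := by linarith
  have heq : p * (u + eC - (v + eA) * (w + eB))
      = v * w * δ + p * eC - p * (v * eB) - p * (w * eA) - p * (eA * eB) := by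
    linear_combination hind - (v * w) * hpδ
  have h2 : v * eB ≤ p * δ := mul_le_mul hA4 hB2 hB3 hp0.le
  have h3 : w * eA ≤ p * δ := mul_le_mul hB4 hA2 hA3 hp0.le
  have h4 : eA * eB ≤ δ * δ := mul_le_mul hA2 hB2 hB3 hδ0
  have h5 : v * w ≤ p * p := mul_le_mul hA4 hB4 hB5 hp0.le
  have hpp : p * p ≤ p := mul_le_of_le_one_left hp0.le hp1
  have hdd : δ * δ ≤ δ := mul_le_of_le_one_left hδ0 hδlt.le
  have hpd0 : 0 ≤ p * δ := mul_nonneg hp0.le hδ0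
  have hpdd : p * δ ≤ δ := mul_le_of_le_one_left hδ0 hp1
  have hT1a : v * w * δ ≤ p * δ := by
    calc v * w * δ ≤ (p * p) * δ := mul_le_mul_of_nonneg_right h5 hδ0
    _ ≤ p * δ := mul_le_mul_of_nonneg_right hpp hδ0
  have hT10 : 0 ≤ v * w * δ := mul_nonneg (mul_nonneg hA5 hB5) hδ0
  have hT2a : p * eC ≤ p * δ := mul_le_mul_of_nonneg_left hC2 hp0.le
  have hT20 : 0 ≤ p * eC := mul_nonneg hp0.le hC3
  have hT30 : 0 ≤ p * (v * eB) := mul_nonneg hp0.le (mul_nonneg hA5 hB3)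
  have hT40 : 0 ≤ p * (w * eA) := mul_nonneg hp0.le (mul_nonneg hB5 hA3)
  have hT50 : 0 ≤ p * (eA * eB) := mul_nonneg hp0.le (mul_nonneg hA3 hB3)
  have hT3a : p * (v * eB) ≤ p * δ := mul_le_mul_of_nonneg_left (h2.trans hpdd) hp0.le
  have hT4a : p * (w * eA) ≤ p * δ := mul_le_mul_of_nonneg_left (h3.trans hpdd) hp0.le
  have hT5a : p * (eA * eB) ≤ p * δ := mul_le_mul_of_nonneg_left (h4.trans hdd) hp0.le
  have hkey : |p * (u + eC - (v + eA) * (w + eB))| ≤ 2 * δ * (p + 1) := by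
    rw [abs_le, heq]
    constructor
    · linarith
    · linarith
  rw [abs_le] at hkey
  constructor
  · have h' : p * (-(2 * δ * (1 + 1 / (1 - δ))))
        ≤ p * (u + eC - (v + eA) * (w + eB)) := by
      have hk := hkey.1
      rw [← hbound] at hk
      linarith
    linarith [(mul_le_mul_iff_right₀ hp0).mp h']
  · have hk := hkey.2
    rw [← hbound] at hk
    linarith [(mul_le_mul_iff_right₀ hp0).mp hk]
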